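/- An exact complex Y• of R-modules is pure acyclic if and only if for every finitely presented module C and every integer n, every chain map from C[-n] (C concentrated in degree n) to Y• is null-homotopic. -/

import Mathlib

open CategoryTheory Limits

/-- A cochain complex of modules is exact. -/
def CxExact (R : Type) [CommRing R] (C : CochainComplex (ModuleCat R) ℤ) : Prop :=
  ∀ n : ℤ, LinearMap.range (C.d (n - 1) n).hom = LinearMap.ker (C.d n (n + 1)).hom

/-- A cochain complex of modules is pure acyclic: it is exact and each cycle
short exact sequence `0 → Z^n → C^n → Z^{n+1} → 0` is pure exact, i.e. the
inclusion `Z^n → C^n` stays injective after tensoring with any module. -/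
def PureAcyclic (R : Type) [CommRing R] (C : CochainComplex (ModuleCat R) ℤ) : Prop :=
  CxExact R C ∧
    ∀ (n : ℤ) (X : Type) [AddCommGroup X] [Module R X],
      Function.Injective (LinearMap.lTensor X (LinearMap.ker (C.d n (n + 1)).hom).subtype)


open TensorProduct LinearMap


lemma exists_fg_vanishing {R M N : Type} [CommRing R] [AddCommGroup M] [Module R M]
    [AddCommGroup N] [Module R N]
    {ι : Type} [Fintype ι] (x : ι → M) (n : ι → N)
    (h : ∑ i, x i ⊗ₜ[R] n i = (0 : M ⊗[R] N)) :
    ∃ (P : Submodule R M) (_ : P.FG) (hx : ∀ i, x i ∈ P),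
      ∑ i, (⟨x i, hx i⟩ : P) ⊗ₜ[R] n i = (0 : P ⊗[R] N) := by
  classical
  let κ := {P : Submodule R M // P.FG}
  haveI : Nonempty κ := ⟨⟨⊥, Submodule.fg_bot⟩⟩
  haveI : IsDirected κ (· ≤ ·) :=
    ⟨fun P Q => ⟨⟨P.1 ⊔ Q.1, P.2.sup Q.2⟩, Subtype.coe_le_coe.mp le_sup_left, Subtype.coe_le_coe.mp le_sup_right⟩⟩
  let G : κ → Type := fun P => ↥P.1
  let f : ∀ P Q : κ, P ≤ Q → G P →ₗ[R] G Q := fun P Q h => Submodule.inclusion h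
  haveI : DirectedSystem G (fun i j h => f i j h) := ⟨fun _ _ => rfl, fun _ _ _ _ _ _ => rfl⟩
  let L : Module.DirectLimit G f →ₗ[R] M :=
    Module.DirectLimit.lift R κ G f (fun P => P.1.subtype) (fun i j hij x => rfl)
  have hLinj : Function.Injective L :=
    Module.DirectLimit.lift_injective _ _ (fun P => Subtype.val_injective)
  have hLsurj : Function.Surjective L := fun m =>
    ⟨Module.DirectLimit.of R κ G f ⟨Submodule.span R {m}, Submodule.fg_span_singleton m⟩
      ⟨m, Submodule.mem_span_singleton_self m⟩, (Module.DirectLimit.lift_of (fun P : κ => P.1.subtype) (fun i j hij x => rfl) _).trans rfl⟩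
  let LE : Module.DirectLimit G f ≃ₗ[R] M := LinearEquiv.ofBijective L ⟨hLinj, hLsurj⟩
  let J : Module.DirectLimit (fun P => G P ⊗[R] N) (fun i j h => LinearMap.rTensor N (f i j h))
      ≃ₗ[R] M ⊗[R] N :=
    (TensorProduct.directLimitLeft f N).symm ≪≫ₗ TensorProduct.congr LE (LinearEquiv.refl R N)
  have hJ : ∀ (P : κ) (g : G P) (m : N),
      J (Module.DirectLimit.of R κ _ _ P (g ⊗ₜ m)) = (g : M) ⊗ₜ m := by
    intro P g m
    simp only [J, LinearEquiv.trans_apply, TensorProduct.directLimitLeft_symm_of_tmul,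
      TensorProduct.congr_tmul, LinearEquiv.refl_apply]
    congr 1
    exact Module.DirectLimit.lift_of (fun P : κ => P.1.subtype) (fun i j hij x => rfl) g
  let P₀ : κ := ⟨Submodule.span R (Set.range x), Submodule.fg_span (Set.finite_range x)⟩
  have hxP₀ : ∀ i, x i ∈ P₀.1 := fun i => Submodule.subset_span ⟨i, rfl⟩
  let t₀ : G P₀ ⊗[R] N := ∑ i, (⟨x i, hxP₀ i⟩ : P₀.1) ⊗ₜ n i
  have h0 : Module.DirectLimit.of R κ _ (fun i j h => LinearMap.rTensor N (f i j h)) P₀ t₀ = 0 := by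
    apply J.injective
    rw [map_zero, map_sum, map_sum]
    simpa only [hJ] using h
  haveI : DirectedSystem (fun P => G P ⊗[R] N) (fun i j h => LinearMap.rTensor N (f i j h)) := by
    have hid : ∀ (i : κ) (h : i ≤ i), f i i h = LinearMap.id := fun i h => by ext a; rfl
    have hcomp : ∀ (p q r : κ) (h1 : p ≤ q) (h2 : q ≤ r),
        f q r h2 ∘ₗ f p q h1 = f p r (h1.trans h2) := fun p q r h1 h2 => by ext a; rfl
    constructor
    · intro i x
      rw [hid, LinearMap.rTensor_id, LinearMap.id_apply]
    · intro _ _ _ h1 h2 x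
      rw [← LinearMap.rTensor_comp_apply, hcomp]
  obtain ⟨Q, hPQ, hQ⟩ := Module.DirectLimit.of.zero_exact h0
  refine ⟨Q.1, Q.2, fun i => hPQ (hxP₀ i), ?_⟩
  rw [map_sum] at hQ
  simp only [LinearMap.rTensor_tmul] at hQ
  exact hQ

lemma sum_single_eq_pi {R : Type} [CommRing R] {m : ℕ} (b : Fin m → R) :
    (∑ j, b j • (Pi.single j (1 : R) : Fin m → R)) = b := by
  ext j'
  simp [Pi.single_apply, Finset.sum_ite_eq']

lemma solv_of_pure {R A : Type} [CommRing R] [AddCommGroup A] [Module R A]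
    {K : Submodule R A}
    (hpure : ∀ (X : Type) [AddCommGroup X] [Module R X],
      Function.Injective (LinearMap.lTensor X K.subtype))
    {m k : ℕ} (a : Fin m → Fin k → R) (z : Fin m → K) (y : Fin k → A)
    (hz : ∀ j, (z j : A) = ∑ i, a j i • y i) :
    ∃ w : Fin k → K, ∀ j, (z j : A) = ∑ i, a j i • (w i : A) := by
  classical
  let β : (Fin k → R) →ₗ[R] (Fin m → R) := (Matrix.of a).mulVecLin
  have hβ : ∀ (u : Fin k → R) (j : Fin m), β u j = ∑ i, a j i * u i := by
    intro u j
    simp [β, Matrix.mulVecLin_apply, Matrix.mulVec, dotProduct]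
  let D := (Fin m → R) ⧸ LinearMap.range β
  let q : (Fin m → R) →ₗ[R] D := (LinearMap.range β).mkQ
  have hq : ∀ (b : Fin m → R), (∑ j, b j • q (Pi.single j 1)) = q b := by
    intro b
    calc (∑ j, b j • q (Pi.single j 1))
        = q (∑ j, b j • (Pi.single j (1:R) : Fin m → R)) := by
          rw [map_sum]; exact Finset.sum_congr rfl (fun j _ => (map_smul q _ _).symm)
      _ = q b := by rw [sum_single_eq_pi]
  have key : (∑ j, q (Pi.single j 1) ⊗ₜ[R] (z j) : D ⊗[R] K) = 0 := by
    apply hpure D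
    rw [map_zero, map_sum]
    simp only [lTensor_tmul, Submodule.coe_subtype]
    apply TensorProduct.sum_tmul_eq_zero_of_vanishesTrivially
    refine ⟨k, a, y, fun j => hz j, fun i => ?_⟩
    rw [hq]
    exact (Submodule.Quotient.mk_eq_zero _).mpr
      ⟨Pi.single i 1, by ext j; rw [hβ]; simp [Pi.single_apply, Finset.sum_ite_eq']⟩
  have hspan : Submodule.span R (Set.range fun j : Fin m => q (Pi.single j 1)) = ⊤ := by
    rw [eq_top_iff]
    rintro d -
    obtain ⟨b, rfl⟩ := Submodule.mkQ_surjective _ d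
    rw [show ((LinearMap.range β).mkQ b) = q b from rfl, ← hq]
    exact Submodule.sum_mem _ fun j _ =>
      Submodule.smul_mem _ _ (Submodule.subset_span ⟨j, rfl⟩)
  obtain ⟨κ, b, w', h₁, h₂⟩ :=
    TensorProduct.vanishesTrivially_of_sum_tmul_eq_zero R hspan key
  have hu : ∀ c : Fin κ, ∃ u : Fin k → R, ∀ j, (∑ i, a j i * u i) = b j c := by
    intro c
    have h2c := h₂ c
    rw [hq] at h2c
    obtain ⟨u, hu⟩ := (Submodule.Quotient.mk_eq_zero _).mp h2c
    exact ⟨u, fun j => by rw [← hβ, hu]⟩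
  choose u hu using hu
  refine ⟨fun i => ∑ c, u c i • w' c, fun j => ?_⟩
  have h₁j : (z j : A) = ∑ c, b j c • (w' c : A) := by
    rw [h₁ j]; push_cast [Submodule.coe_sum]; rfl
  rw [h₁j]
  simp only [Submodule.coe_sum, SetLike.val_smul, Finset.smul_sum, smul_smul]
  rw [Finset.sum_comm]
  refine Finset.sum_congr rfl fun c _ => ?_
  rw [← Finset.sum_smul, hu c j]

lemma sum_single_eq_pi' {R : Type} [CommRing R] {κ : Type} [Fintype κ] [DecidableEq κ]
    (b : κ → R) : (∑ j, b j • (Pi.single j (1 : R) : κ → R)) = b := by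
  ext j'
  simp [Pi.single_apply, Finset.sum_ite_eq']

lemma solv_of_lift {R A B : Type} [CommRing R] [AddCommGroup A] [Module R A]
    [AddCommGroup B] [Module R B] (f : A →ₗ[R] B)
    (hlift : ∀ (C : Type) [AddCommGroup C] [Module R C], Module.FinitePresentation R C →
      ∀ g : C →ₗ[R] B, LinearMap.range g ≤ LinearMap.range f → ∃ h : C →ₗ[R] A, f ∘ₗ h = g)
    {m : ℕ} {κ : Type} [Fintype κ] [DecidableEq κ]
    (a : Fin m → κ → R) (v : Fin m → LinearMap.ker f) (y : κ → A)
    (hv : ∀ l, (v l : A) = ∑ j, a l j • y j) :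
    ∃ w : κ → LinearMap.ker f, ∀ l, (v l : A) = ∑ j, a l j • (w j : A) := by
  classical
  let S : Submodule R (κ → R) := Submodule.span R (Set.range a)
  have hSfg : S.FG := Submodule.fg_span (Set.finite_range a)
  let C := (κ → R) ⧸ S
  haveI : Module.FinitePresentation R (κ → R) := Module.finitePresentation_of_projective R _
  haveI hfp : Module.FinitePresentation R C := by
    apply Module.finitePresentation_of_surjective S.mkQ (Submodule.mkQ_surjective S)
    rwa [Submodule.ker_mkQ]
  let g₀ : (κ → R) →ₗ[R] B := Fintype.linearCombination R (fun j => f (y j))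
  have hg₀ : ∀ u : κ → R, g₀ u = ∑ j, u j • f (y j) := fun u =>
    rfl
  have hSle : S ≤ LinearMap.ker g₀ := by
    rw [Submodule.span_le]
    rintro _ ⟨l, rfl⟩
    have h1 : g₀ (a l) = f (v l : A) := by
      rw [hg₀, hv l, map_sum]
      exact Finset.sum_congr rfl fun j _ => (map_smul f _ _).symm
    simp only [SetLike.mem_coe, LinearMap.mem_ker, h1]
    exact LinearMap.mem_ker.mp (v l).2
  let g : C →ₗ[R] B := S.liftQ g₀ hSle
  have hgmk : ∀ u : κ → R, g (S.mkQ u) = g₀ u := fun u => rfl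
  have hgrange : LinearMap.range g ≤ LinearMap.range f := by
    rintro _ ⟨c, rfl⟩
    obtain ⟨u, rfl⟩ := Submodule.mkQ_surjective S c
    rw [hgmk, hg₀]
    refine ⟨∑ j, u j • y j, ?_⟩
    rw [map_sum]
    exact Finset.sum_congr rfl fun j _ => map_smul f _ _
  obtain ⟨h, hh⟩ := hlift C hfp g hgrange
  have hfh : ∀ c : C, f (h c) = g c := fun c => congrFun (congrArg (fun m => m.toFun) hh) c
  have hgsingle : ∀ j, g (S.mkQ (Pi.single j 1)) = f (y j) := by
    intro j
    rw [hgmk, hg₀]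
    simp [Pi.single_apply]
  refine ⟨fun j => ⟨y j - h (S.mkQ (Pi.single j 1)), ?_⟩, fun l => ?_⟩
  · rw [LinearMap.mem_ker, map_sub, hfh, hgsingle, sub_self]
  · have h2 : (∑ j, a l j • h (S.mkQ (Pi.single j 1))) = h (S.mkQ (a l)) := by
      conv_rhs => rw [← sum_single_eq_pi' (a l)]
      rw [map_sum, map_sum]
      exact Finset.sum_congr rfl fun j _ => by rw [map_smul, map_smul]
    have h3 : S.mkQ (a l) = 0 := by
      rw [Submodule.mkQ_apply, Submodule.Quotient.mk_eq_zero]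
      exact Submodule.subset_span ⟨l, rfl⟩
    simp only [smul_sub]
    rw [Finset.sum_sub_distrib, ← hv l, h2, h3, map_zero, sub_zero]

theorem pure_iff_lift {R A B : Type} [CommRing R] [AddCommGroup A] [Module R A]
    [AddCommGroup B] [Module R B] (f : A →ₗ[R] B) :
    (∀ (X : Type) [AddCommGroup X] [Module R X],
        Function.Injective (LinearMap.lTensor X (LinearMap.ker f).subtype)) ↔
      (∀ (C : Type) [AddCommGroup C] [Module R C], Module.FinitePresentation R C →
        ∀ g : C →ₗ[R] B, LinearMap.range g ≤ LinearMap.range f →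
          ∃ h : C →ₗ[R] A, f ∘ₗ h = g) := by
  constructor
  · intro hpure C _ _ hfp g hg
    classical
    haveI := hfp
    obtain ⟨k, p, hp⟩ := Module.Finite.exists_fin' R C
    have hK' : (LinearMap.ker p).FG := Module.FinitePresentation.fg_ker p hp
    obtain ⟨m, v, hv⟩ := Submodule.fg_iff_exists_fin_generating_family.mp hK'
    have hy : ∀ i : Fin k, ∃ a : A, f a = g (p (Pi.single i 1)) := fun i => hg ⟨_, rfl⟩
    choose y hy using hy
    let φ : (Fin k → R) →ₗ[R] A := Fintype.linearCombination R y
    have hφ : ∀ u : Fin k → R, φ u = ∑ i, u i • y i := fun u => rfl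
    have hfφ : ∀ u : Fin k → R, f (φ u) = g (p u) := by
      intro u
      rw [hφ, map_sum]
      have : ∀ i, f (u i • y i) = u i • g (p (Pi.single i 1)) := fun i => by
        rw [map_smul, hy i]
      rw [Finset.sum_congr rfl fun i _ => this i]
      have : (∑ i, u i • g (p (Pi.single i 1))) = g (p (∑ i, u i • (Pi.single i (1:R) : Fin k → R))) := by
        rw [map_sum, map_sum]
        exact Finset.sum_congr rfl fun i _ => by rw [map_smul, map_smul]
      rw [this, sum_single_eq_pi]
    have hvmem : ∀ l : Fin m, p (v l) = 0 := fun l =>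
      LinearMap.mem_ker.mp (hv ▸ Submodule.subset_span ⟨l, rfl⟩)
    have hvK : ∀ l : Fin m, f (φ (v l)) = 0 := by
      intro l
      rw [hfφ, hvmem l, map_zero]
    let z : Fin m → LinearMap.ker f := fun l => ⟨φ (v l), LinearMap.mem_ker.mpr (hvK l)⟩
    have hz : ∀ l, (z l : A) = ∑ i, v l i • y i := fun l => hφ _
    obtain ⟨w, hw⟩ := solv_of_pure hpure v z y hz
    let θ : (Fin k → R) →ₗ[R] A := Fintype.linearCombination R (fun i => (w i : A))
    have hθ : ∀ u : Fin k → R, θ u = ∑ i, u i • (w i : A) := fun u => rfl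
    have hfθ : ∀ u : Fin k → R, f (θ u) = 0 := by
      intro u
      rw [hθ, map_sum]
      simp only [map_smul]
      have : ∀ i : Fin k, f (w i : A) = 0 := fun i => LinearMap.mem_ker.mp (w i).2
      simp [this]
    let ρ : (Fin k → R) →ₗ[R] A := φ - θ
    have hker : LinearMap.ker p ≤ LinearMap.ker ρ := by
      rw [← hv, Submodule.span_le]
      rintro _ ⟨l, rfl⟩
      simp only [SetLike.mem_coe, LinearMap.mem_ker, ρ, LinearMap.sub_apply]
      rw [hθ, ← hw l]
      exact sub_eq_zero_of_eq rfl
    let e : ((Fin k → R) ⧸ LinearMap.ker p) ≃ₗ[R] C := p.quotKerEquivOfSurjective hp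
    have he : ∀ u : Fin k → R, e (Submodule.Quotient.mk u) = p u := fun u => rfl
    let h : C →ₗ[R] A := ((LinearMap.ker p).liftQ ρ hker) ∘ₗ (e.symm : C →ₗ[R] _)
    refine ⟨h, ?_⟩
    ext c
    obtain ⟨u, rfl⟩ := hp c
    have he' : e.symm (p u) = Submodule.Quotient.mk u := by
      rw [LinearEquiv.symm_apply_eq, he]
    show f (((LinearMap.ker p).liftQ ρ hker) (e.symm (p u))) = g (p u)
    rw [he', Submodule.liftQ_apply]
    show f (φ u - θ u) = g (p u)
    rw [map_sub, hfφ, hfθ, sub_zero]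
  · intro hlift X _ _
    classical
    rw [injective_iff_map_eq_zero]
    intro t ht
    obtain ⟨s, rfl⟩ := TensorProduct.exists_finset t
    rw [← Finset.sum_coe_sort s] at ht ⊢
    set x : ↥s → X := fun p => (p : X × LinearMap.ker f).1 with hxdef
    set z : ↥s → LinearMap.ker f := fun p => (p : X × LinearMap.ker f).2 with hzdef
    rw [map_sum] at ht
    simp only [LinearMap.lTensor_tmul, Submodule.coe_subtype] at ht
    obtain ⟨P, hPfg, hx, hvan⟩ := exists_fg_vanishing x (fun p => (z p : A)) ht
    haveI : Module.Finite R ↥P := Module.Finite.iff_fg.mpr hPfg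
    obtain ⟨nn, s', hs'⟩ := Module.Finite.exists_fin (R := R) (M := ↥P)
    have hc : ∀ p : ↥s, ∃ c : Fin nn → R, (∑ l, c l • s' l) = ⟨x p, hx p⟩ := by
      intro p
      have : (⟨x p, hx p⟩ : P) ∈ Submodule.span R (Set.range s') := by
        rw [hs']; trivial
      exact (Submodule.mem_span_range_iff_exists_fun R).mp this
    choose c hc using hc
    let v : Fin nn → LinearMap.ker f := fun l => ∑ p, c p l • z p
    have hvcoe : ∀ l, (v l : A) = ∑ p, c p l • (z p : A) := by
      intro l
      simp [v, Submodule.coe_sum]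
    have hvan' : (∑ l, s' l ⊗ₜ[R] (v l : A)) = (0 : P ⊗[R] A) := by
      calc (∑ l, s' l ⊗ₜ[R] (v l : A))
          = ∑ l, ∑ p, (c p l • s' l) ⊗ₜ[R] (z p : A) := by
            refine Finset.sum_congr rfl fun l _ => ?_
            rw [hvcoe, TensorProduct.tmul_sum]
            exact Finset.sum_congr rfl fun p _ => by
              rw [TensorProduct.tmul_smul, TensorProduct.smul_tmul']
        _ = ∑ p, (∑ l, c p l • s' l) ⊗ₜ[R] (z p : A) := by
            rw [Finset.sum_comm]
            exact Finset.sum_congr rfl fun p _ => (TensorProduct.sum_tmul _ _ _).symm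
        _ = ∑ p, (⟨x p, hx p⟩ : P) ⊗ₜ[R] (z p : A) := by
            exact Finset.sum_congr rfl fun p _ => by rw [hc p]
        _ = 0 := hvan
    obtain ⟨κ', b, yy, hb1, hb2⟩ :=
      TensorProduct.vanishesTrivially_of_sum_tmul_eq_zero R hs' hvan'
    haveI : DecidableEq (Fin κ') := Classical.decEq _
    obtain ⟨w, hw⟩ := solv_of_lift f hlift b v yy hb1
    have hweq : ∀ l, v l = ∑ j, b l j • w j := by
      intro l
      apply Subtype.val_injective
      rw [hw l]
      simp [Submodule.coe_sum]
    have hxp : ∀ p : ↥s, x p = ∑ l, c p l • ((s' l : ↥P) : X) := by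
      intro p
      have := congrArg (Subtype.val : ↥P → X) (hc p)
      simpa [Submodule.coe_sum] using this.symm
    calc (∑ p : ↥s, x p ⊗ₜ[R] z p)
        = ∑ p, ∑ l, (c p l • ((s' l : ↥P) : X)) ⊗ₜ[R] z p := by
          refine Finset.sum_congr rfl fun p _ => ?_
          rw [hxp p]
          exact TensorProduct.sum_tmul _ _ _
      _ = ∑ l, ∑ p, ((s' l : ↥P) : X) ⊗ₜ[R] (c p l • z p) := by
          rw [Finset.sum_comm]
          exact Finset.sum_congr rfl fun l _ => Finset.sum_congr rfl fun p _ =>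
            TensorProduct.smul_tmul _ _ _
      _ = ∑ l, ((s' l : ↥P) : X) ⊗ₜ[R] v l := by
          exact Finset.sum_congr rfl fun l _ => (TensorProduct.tmul_sum _ _ _).symm
      _ = ∑ l, ∑ j, (b l j • ((s' l : ↥P) : X)) ⊗ₜ[R] w j := by
          refine Finset.sum_congr rfl fun l _ => ?_
          rw [hweq l, TensorProduct.tmul_sum]
          exact Finset.sum_congr rfl fun j _ => by
            rw [TensorProduct.tmul_smul, TensorProduct.smul_tmul']
      _ = ∑ j, (((∑ l, b l j • s' l : ↥P) : X)) ⊗ₜ[R] w j := by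
          rw [Finset.sum_comm]
          refine Finset.sum_congr rfl fun j _ => ?_
          rw [← TensorProduct.sum_tmul]
          congr 1
          simp [Submodule.coe_sum]
      _ = 0 := by
          refine Finset.sum_eq_zero fun j _ => ?_
          rw [hb2 j]
          simp


section Homological

variable {R : Type} [CommRing R]

lemma homotopy_of_factor (Y : CochainComplex (ModuleCat R) ℤ)
    {C : ModuleCat R} (n : ℤ)
    (f : (HomologicalComplex.single (ModuleCat R) (ComplexShape.up ℤ) n).obj C ⟶ Y)
    (s : C ⟶ Y.X (n - 1))
    (hs : s ≫ Y.d (n - 1) n =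
      (HomologicalComplex.singleObjXSelf (ComplexShape.up ℤ) n C).inv ≫ f.f n) :
    Nonempty (Homotopy f 0) := by
  classical
  let hom : ∀ i j, ((HomologicalComplex.single (ModuleCat R) (ComplexShape.up ℤ) n).obj C).X i
      ⟶ Y.X j :=
    fun i j => if h : i = n ∧ j = n - 1 then
      eqToHom (congrArg
          (fun k => ((HomologicalComplex.single (ModuleCat R) (ComplexShape.up ℤ) n).obj C).X k)
          h.1) ≫
        (HomologicalComplex.singleObjXSelf (ComplexShape.up ℤ) n C).hom ≫ s ≫
          eqToHom (congrArg Y.X h.2.symm)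
    else 0
  have homn : hom n (n - 1) =
      (HomologicalComplex.singleObjXSelf (ComplexShape.up ℤ) n C).hom ≫ s := by
    simp [hom]
  refine ⟨⟨hom, ?_, ?_⟩⟩
  · intro i j hrel
    by_cases h : i = n ∧ j = n - 1
    · exfalso
      obtain ⟨rfl, rfl⟩ := h
      exact hrel (show (i - 1) + 1 = i by omega)
    · exact dif_neg h
  · intro i
    by_cases hi : i = n
    · subst hi
      rw [dNext_eq hom (show (ComplexShape.up ℤ).Rel i (i + 1) from rfl),
        prevD_eq hom (show (ComplexShape.up ℤ).Rel (i - 1) i from show (i - 1) + 1 = i by omega),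
        HomologicalComplex.single_obj_d, homn]
      simp only [Limits.zero_comp, Category.assoc, hs, Iso.hom_inv_id_assoc, zero_add,
        HomologicalComplex.zero_f, add_zero]
    · apply (HomologicalComplex.isZero_single_obj_X
        (ComplexShape.up ℤ) n C i hi).eq_of_src

theorem stmt_8 (R : Type) [CommRing R] (Y : CochainComplex (ModuleCat R) ℤ)
    (hexact : CxExact R Y) :
    PureAcyclic R Y ↔
      ∀ (C : Type) (_ : AddCommGroup C) (_ : Module R C),
        Module.FinitePresentation R C →
        ∀ (n : ℤ)
          (f : (HomologicalComplex.single (ModuleCat R) (ComplexShape.up ℤ) n).obj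
                (ModuleCat.of R C) ⟶ Y),
          Nonempty (Homotopy f 0) := by
  constructor
  · rintro ⟨-, hpure⟩ C iC iM hfp n f
    letI := iC; letI := iM
    let ι := HomologicalComplex.singleObjXSelf (ComplexShape.up ℤ) n (ModuleCat.of R C)
    let φ : ModuleCat.of R C ⟶ Y.X n := ι.inv ≫ f.f n
    have h1 : f.f n ≫ Y.d n (n + 1) = 0 := by
      rw [f.comm n (n + 1), HomologicalComplex.single_obj_d, Limits.zero_comp]
    have h2 : φ ≫ Y.d n (n + 1) = 0 := by
      simp only [φ, Category.assoc, h1, Limits.comp_zero]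
    have hrange : LinearMap.range φ.hom ≤
        LinearMap.range (Y.d (n - 1) n).hom := by
      rintro _ ⟨c, rfl⟩
      rw [hexact n]
      exact LinearMap.mem_ker.mpr (congrArg (fun g => ModuleCat.Hom.hom g c) h2)
    have hpure'' : ∀ (a b : ℤ), a + 1 = b → ∀ (X : Type) [AddCommGroup X] [Module R X],
        Function.Injective (LinearMap.lTensor X (LinearMap.ker (Y.d a b).hom).subtype) := by
      intro a b hab
      subst hab
      exact hpure a
    have hpure' := hpure'' (n - 1) n (by omega)
    obtain ⟨h, hh⟩ := (pure_iff_lift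
      (Y.d (n - 1) n).hom).mp hpure' C hfp φ.hom hrange
    exact homotopy_of_factor Y n f (ModuleCat.ofHom h) (ModuleCat.hom_ext hh)
  · intro hhom
    have hex' : ∀ a b : ℤ, b = a + 1 →
        LinearMap.range (Y.d a b).hom = LinearMap.ker (Y.d b (b + 1)).hom := by
      intro a b hab
      have e : b - 1 = a := by omega
      subst e
      exact hexact b
    refine ⟨hexact, fun n X _ _ => ?_⟩
    refine (pure_iff_lift (Y.d n (n + 1)).hom).mpr ?_ X
    intro C iC iM hfp g hrange
    let ι := HomologicalComplex.singleObjXSelf (ComplexShape.up ℤ) (n + 1) (ModuleCat.of R C)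
    let gm : ModuleCat.of R C ⟶ Y.X (n + 1) := ModuleCat.ofHom g
    have hg' : ∀ k, (ComplexShape.up ℤ).Rel (n + 1) k → gm ≫ Y.d (n + 1) k = 0 := by
      intro k hk
      obtain rfl : (n + 1) + 1 = k := hk
      apply ModuleCat.hom_ext
      apply LinearMap.ext
      intro c
      have hmem : g c ∈ LinearMap.range (Y.d n (n + 1)).hom :=
        hrange ⟨c, rfl⟩
      rw [hex' n (n + 1) rfl] at hmem
      exact LinearMap.mem_ker.mp hmem
    let f' := HomologicalComplex.mkHomFromSingle gm hg'
    obtain ⟨ht⟩ := hhom C iC iM hfp (n + 1) f'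
    have hcomm := ht.comm (n + 1)
    rw [dNext_eq ht.hom (show (ComplexShape.up ℤ).Rel (n + 1) (n + 1 + 1) from rfl),
      prevD_eq ht.hom (show (ComplexShape.up ℤ).Rel n (n + 1) from rfl),
      HomologicalComplex.single_obj_d] at hcomm
    simp only [Limits.zero_comp, zero_add, HomologicalComplex.zero_f, add_zero] at hcomm
    refine ⟨(ι.inv ≫ ht.hom (n + 1) n : ModuleCat.of R C ⟶ Y.X n).hom, ?_⟩
    have hfin : ι.inv ≫ (ht.hom (n + 1) n ≫ Y.d n (n + 1)) = gm := by
      rw [← hcomm, HomologicalComplex.mkHomFromSingle_f, Iso.inv_hom_id_assoc]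
    exact congrArg ModuleCat.Hom.hom hfin

end Homological
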